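/- Fix r̄ > 0. There exist a constant c₄ > 0 and N₀ ∈ ℕ such that for every N ≥ N₀ and every diagonal matrix R = diag(r₁,…,r_N) with 0 < r_i ≤ r̄ for all i, there exists a nonzero x ∈ ℝ^N with ‖BRBᵀ x‖₂ ≤ (c₄ r̄/N²)·‖x‖₂; that is, the smallest singular value of BRBᵀ is at most c₄ r̄/N² for N sufficiently large. -/

import Mathlib

open Matrix MeasureTheory Real

/-- The N×N matrix with 1 on the diagonal and -1 on the first superdiagonal. -/
noncomputable def Bmat (N : ℕ) : Matrix (Fin N) (Fin N) ℝ :=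
  Matrix.of fun i j => if j = i then 1 else if (j : ℕ) = (i : ℕ) + 1 then -1 else 0

/-- Entrywise absolute value of `Bmat N`. -/
noncomputable def absB (N : ℕ) : Matrix (Fin N) (Fin N) ℝ :=
  Matrix.of fun i j => |Bmat N i j|

/-- Euclidean norm of a vector in ℝ^N. -/
noncomputable def norm2 {N : ℕ} (x : Fin N → ℝ) : ℝ := Real.sqrt (x ⬝ᵥ x)

/-- The Hamiltonian H(p, Δ) = ½(p − v₀M𝟙)ᵀ M⁻¹ (p − v₀M𝟙) + ½ Δᵀ A Δ. -/
noncomputable def Ham {N : ℕ} (v0 : ℝ) (m a : Fin N → ℝ) (p Δ : Fin N → ℝ) : ℝ :=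
  (1/2) * ((p - v0 • (Matrix.diagonal m *ᵥ fun _ => 1)) ⬝ᵥ
      (Matrix.diagonal (fun i => (m i)⁻¹) *ᵥ (p - v0 • (Matrix.diagonal m *ᵥ fun _ => 1)))) +
  (1/2) * (Δ ⬝ᵥ (Matrix.diagonal a *ᵥ Δ))

lemma Bmat_mulVec {N : ℕ} (v : Fin N → ℝ) (i : Fin N) :
    (Bmat N *ᵥ v) i = v i - (if h : (i : ℕ) + 1 < N then v ⟨(i : ℕ) + 1, h⟩ else 0) := by
  simp only [Bmat, Matrix.mulVec, dotProduct, Matrix.of_apply]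
  have key : ∀ j : Fin N,
      (if j = i then (1:ℝ) else if (j : ℕ) = (i : ℕ) + 1 then -1 else 0) * v j
      = (if j = i then v j else 0) + (if (j : ℕ) = (i : ℕ) + 1 then -v j else 0) := by
    intro j
    by_cases h1 : j = i
    · have h2 : ¬ ((j : ℕ) = (i : ℕ) + 1) := by subst h1; omega
      simp [h1, h2]
    · by_cases h2 : (j : ℕ) = (i : ℕ) + 1 <;> simp [h1, h2]
  rw [Finset.sum_congr rfl fun j _ => key j, Finset.sum_add_distrib,
    Finset.sum_ite_eq' Finset.univ i v]
  simp only [Finset.mem_univ, if_true]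
  congr 1
  by_cases h : (i : ℕ) + 1 < N
  · rw [dif_pos h]
    have hiff : ∀ j : Fin N, ((j : ℕ) = (i : ℕ) + 1) ↔ j = ⟨(i : ℕ) + 1, h⟩ := by
      intro j
      constructor
      · intro hh; exact Fin.ext hh
      · intro hh; rw [hh]
    simp_rw [hiff]
    rw [Finset.sum_ite_eq' Finset.univ _ (fun j => -v j)]
    simp
  · rw [dif_neg h, neg_zero]
    apply Finset.sum_eq_zero
    intro j _
    rw [if_neg]
    have := j.isLt
    omega

lemma Bmat_transpose_mulVec {N : ℕ} (x : Fin N → ℝ) (j : Fin N) :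
    ((Bmat N)ᵀ *ᵥ x) j = x j - (if h : 0 < (j : ℕ) then x ⟨(j : ℕ) - 1, by omega⟩ else 0) := by
  simp only [Bmat, Matrix.mulVec, dotProduct, Matrix.transpose_apply, Matrix.of_apply]
  have key : ∀ i : Fin N,
      (if j = i then (1:ℝ) else if (j : ℕ) = (i : ℕ) + 1 then -1 else 0) * x i
      = (if i = j then x i else 0) + (if (j : ℕ) = (i : ℕ) + 1 then -x i else 0) := by
    intro i
    by_cases h1 : j = i
    · subst h1
      simp [show ¬ ((j : ℕ) = (j : ℕ) + 1) by omega]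
    · have h1' : ¬ (i = j) := fun hh => h1 hh.symm
      by_cases h2 : (j : ℕ) = (i : ℕ) + 1 <;> simp [h1, h1', h2]
  rw [Finset.sum_congr rfl fun i _ => key i, Finset.sum_add_distrib,
    Finset.sum_ite_eq' Finset.univ j x]
  simp only [Finset.mem_univ, if_true]
  congr 1
  by_cases h : 0 < (j : ℕ)
  · rw [dif_pos h]
    have hlt : (j : ℕ) - 1 < N := by have := j.isLt; omega
    have hiff : ∀ i : Fin N, ((j : ℕ) = (i : ℕ) + 1) ↔ i = ⟨(j : ℕ) - 1, hlt⟩ := by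
      intro i
      constructor
      · intro hh; apply Fin.ext; simp; omega
      · intro hh; subst hh; simp; omega
    simp_rw [hiff]
    rw [Finset.sum_ite_eq' Finset.univ _ (fun i => -x i)]
    simp
  · rw [dif_neg h, neg_zero]
    apply Finset.sum_eq_zero
    intro i _
    rw [if_neg]
    omega

/-- the smallest singular value of BRBᵀ is at most c₄ r̄/N² for N
sufficiently large. -/
theorem stmt_11 (rbar : ℝ) (hrbar : 0 < rbar) :
    ∃ c₄ : ℝ, 0 < c₄ ∧ ∃ N₀ : ℕ, ∀ N : ℕ, N₀ ≤ N →
      ∀ r : Fin N → ℝ, (∀ i, 0 < r i ∧ r i ≤ rbar) →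
        ∃ x : Fin N → ℝ, x ≠ 0 ∧
          norm2 ((Bmat N * Matrix.diagonal r * (Bmat N)ᵀ) *ᵥ x)
            ≤ c₄ * rbar / (N : ℝ) ^ 2 * norm2 x := by
  refine ⟨6, by norm_num, 2, fun N hN r hr => ?_⟩
  have hN2 : 2 ≤ N := hN
  have hNR : (2:ℝ) ≤ (N:ℝ) := by exact_mod_cast hN
  have hN0 : (0:ℝ) < (N:ℝ) := by linarith
  -- the building block
  set F : ℕ → ℝ := fun k => if h : k < N then ((N:ℝ) - k) / ((N:ℝ) * r ⟨k, h⟩) else 0 with hF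
  have hFpos : ∀ k, (hk : k < N) → 0 < F k := by
    intro k hk
    rw [hF]
    simp only [dif_pos hk]
    have h1 : (0:ℝ) < (N:ℝ) - k := by
      have : (k:ℝ) < (N:ℝ) := by exact_mod_cast hk
      linarith
    exact div_pos h1 (mul_pos hN0 (hr _).1)
  have hFnonneg : ∀ k, 0 ≤ F k := by
    intro k
    by_cases hk : k < N
    · exact (hFpos k hk).le
    · rw [hF]; simp [hk]
  -- the test vector
  set x : Fin N → ℝ := fun i => ∑ k ∈ Finset.range ((i:ℕ)+1), F k with hx
  -- Step A : Bᵀ x = F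
  have stepA : ∀ j : Fin N, ((Bmat N)ᵀ *ᵥ x) j = F (j:ℕ) := by
    intro j
    rw [Bmat_transpose_mulVec]
    by_cases h : 0 < (j:ℕ)
    · rw [dif_pos h]
      have hj1 : (j:ℕ) - 1 + 1 = (j:ℕ) := by omega
      have : x ⟨(j:ℕ) - 1, by omega⟩ = ∑ k ∈ Finset.range ((j:ℕ)), F k := by
        rw [hx]; simp only; rw [hj1]
      rw [this, hx]
      simp only
      rw [Finset.sum_range_succ]
      ring
    · rw [dif_neg h]
      have hj0 : (j:ℕ) = 0 := by omega
      rw [hx]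
      simp only [hj0]
      simp
  -- Step B : diag r (F) = s with s k = (N-k)/N
  have stepB : ∀ k : Fin N, (Matrix.diagonal r *ᵥ fun j : Fin N => F (j:ℕ)) k
      = ((N:ℝ) - (k:ℕ)) / (N:ℝ) := by
    intro k
    rw [Matrix.mulVec_diagonal]
    rw [hF]
    simp only [dif_pos k.isLt]
    have hrk : r k ≠ 0 := ne_of_gt (hr k).1
    have hNne : (N:ℝ) ≠ 0 := ne_of_gt hN0
    rw [Fin.eta]
    field_simp
  -- Step C : B s = 1/N
  have stepC : ∀ i : Fin N, (Bmat N *ᵥ fun k : Fin N => ((N:ℝ) - (k:ℕ)) / (N:ℝ)) i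
      = 1 / (N:ℝ) := by
    intro i
    rw [Bmat_mulVec]
    by_cases h : (i:ℕ) + 1 < N
    · rw [dif_pos h]
      simp only
      push_cast
      have hNne : (N:ℝ) ≠ 0 := ne_of_gt hN0
      field_simp
      ring
    · rw [dif_neg h]
      have hi : (i:ℕ) = N - 1 := by have := i.isLt; omega
      have hcast : ((i:ℕ):ℝ) = (N:ℝ) - 1 := by
        rw [hi]
        have h1 : (1:ℕ) ≤ N := by omega
        push_cast [h1]
        ring
      rw [hcast]
      ring
  -- hence M x is the constant vector 1/N
  have hMx : ((Bmat N * Matrix.diagonal r * (Bmat N)ᵀ) *ᵥ x) = fun _ : Fin N => 1 / (N:ℝ) := by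
    funext i
    rw [← Matrix.mulVec_mulVec, ← Matrix.mulVec_mulVec]
    have h1 : ((Bmat N)ᵀ *ᵥ x) = fun j : Fin N => F (j:ℕ) := funext stepA
    rw [h1]
    have h2 : (Matrix.diagonal r *ᵥ fun j : Fin N => F (j:ℕ))
        = fun k : Fin N => ((N:ℝ) - (k:ℕ)) / (N:ℝ) := funext stepB
    rw [h2]
    exact stepC i
  -- middle index
  have hmlt : N / 2 < N := by omega
  set mF : Fin N := ⟨N / 2, hmlt⟩ with hmF
  have hmc : (mF : ℕ) = N / 2 := rfl
  set q : ℝ := ((N / 2 : ℕ) : ℝ) with hq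
  have hq1 : 2 * q ≤ (N:ℝ) := by
    rw [hq]
    have : 2 * (N / 2) ≤ N := by omega
    exact_mod_cast this
  have hq2 : (N:ℝ) ≤ 2 * q + 1 := by
    rw [hq]
    have : N ≤ 2 * (N / 2) + 1 := by omega
    exact_mod_cast this
  have hq0 : 0 ≤ q := by rw [hq]; positivity
  -- lower bound on x at the middle index
  set c : ℝ := ((N:ℝ) - q) / ((N:ℝ) * rbar) with hc
  have hterm : ∀ k ∈ Finset.range (N / 2 + 1), c ≤ F k := by
    intro k hk
    rw [Finset.mem_range] at hk
    have hkN : k < N := by omega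
    rw [hF]
    simp only [dif_pos hkN]
    have hkq : (k:ℝ) ≤ q := by
      rw [hq]
      have : k ≤ N / 2 := by omega
      exact_mod_cast this
    have hnum : (N:ℝ) - q ≤ (N:ℝ) - k := by linarith
    have hden : (N:ℝ) * r ⟨k, hkN⟩ ≤ (N:ℝ) * rbar :=
      mul_le_mul_of_nonneg_left (hr _).2 (le_of_lt hN0)
    rw [hc]
    exact div_le_div₀ (by linarith [hkq, hq1, hNR, Nat.cast_nonneg (α := ℝ) k]) hnum
      (mul_pos hN0 (hr _).1) hden
  have hxm : (N:ℝ) / (4 * rbar) ≤ x mF := by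
    have h1 : (Finset.range (N / 2 + 1)).card • c ≤ ∑ k ∈ Finset.range (N / 2 + 1), F k :=
      Finset.card_nsmul_le_sum _ _ _ hterm
    rw [Finset.card_range] at h1
    have h2 : ((N / 2 + 1 : ℕ) : ℝ) * c ≤ x mF := by
      rw [hx]
      simp only
      rwa [nsmul_eq_mul] at h1
    have h3 : ((N / 2 + 1 : ℕ) : ℝ) = q + 1 := by rw [hq]; push_cast; ring
    rw [h3] at h2
    refine le_trans ?_ h2
    rw [hc]
    have hrw : (q + 1) * (((N:ℝ) - q) / ((N:ℝ) * rbar))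
        = ((q + 1) * ((N:ℝ) - q)) / ((N:ℝ) * rbar) := by ring
    rw [hrw, div_le_div_iff₀ (by positivity) (by positivity)]
    have hkey : (N:ℝ)^2 ≤ 4 * ((q + 1) * ((N:ℝ) - q)) := by
      nlinarith [mul_nonneg (sub_nonneg.2 hq1) (sub_nonneg.2 hq2)]
    nlinarith [mul_le_mul_of_nonneg_left hkey hrbar.le]
  have hxmpos : 0 < x mF := lt_of_lt_of_le (by positivity) hxm
  -- monotonicity
  have hmono : ∀ i : Fin N, mF ≤ i → x mF ≤ x i := by
    intro i hi
    have hi' : (mF : ℕ) ≤ (i : ℕ) := hi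
    rw [hx]
    simp only
    apply Finset.sum_le_sum_of_subset_of_nonneg
    · exact Finset.range_subset_range.mpr (by omega)
    · intro k _ _
      exact hFnonneg k
  -- lower bound on the dot product
  set S : ℝ := x ⬝ᵥ x with hS
  have hSsum : S = ∑ i : Fin N, x i * x i := by rw [hS]; rfl
  have hSlb : (N:ℝ)^3 / (32 * rbar^2) ≤ S := by
    have h1 : ∑ _i ∈ Finset.Ici mF, x mF * x mF ≤ ∑ i ∈ Finset.Ici mF, x i * x i := by
      apply Finset.sum_le_sum
      intro i hi
      rw [Finset.mem_Ici] at hi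
      have h := hmono i hi
      nlinarith
    have h2 : ∑ i ∈ Finset.Ici mF, x i * x i ≤ S := by
      rw [hSsum]
      apply Finset.sum_le_sum_of_subset_of_nonneg (Finset.subset_univ _)
      intro i _ _
      exact mul_self_nonneg _
    have h3 : ∑ _i ∈ Finset.Ici mF, x mF * x mF = ((N - N / 2 : ℕ) : ℝ) * (x mF * x mF) := by
      rw [Finset.sum_const, Fin.card_Ici, nsmul_eq_mul, hmc]
    have h4 : (N:ℝ) / 2 ≤ ((N - N / 2 : ℕ) : ℝ) := by
      have hnn : ((N - N / 2 : ℕ) : ℝ) = (N:ℝ) - q := by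
        rw [hq]
        have hle : N / 2 ≤ N := by omega
        push_cast [hle]
        ring
      rw [hnn]
      linarith
    have h5 : ((N:ℝ) / (4 * rbar))^2 ≤ x mF * x mF := by
      rw [sq]
      exact mul_le_mul hxm hxm (by positivity) hxmpos.le
    have h6 : (N:ℝ)^3 / (32 * rbar^2) ≤ ((N - N / 2 : ℕ) : ℝ) * (x mF * x mF) := by
      have hsq : (0:ℝ) ≤ ((N:ℝ) / (4 * rbar))^2 := by positivity
      calc (N:ℝ)^3 / (32 * rbar^2) = ((N:ℝ)/2) * (((N:ℝ) / (4 * rbar))^2) := by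
            field_simp
            ring
        _ ≤ ((N - N / 2 : ℕ) : ℝ) * (x mF * x mF) := by
            apply mul_le_mul h4 h5 hsq
            linarith
    linarith
  -- conclude
  refine ⟨x, ?_, ?_⟩
  · intro h0
    have := congrFun h0 mF
    simp only [Pi.zero_apply] at this
    rw [this] at hxmpos
    exact lt_irrefl 0 hxmpos
  · rw [hMx]
    have hdot : (fun _ : Fin N => 1/(N:ℝ)) ⬝ᵥ (fun _ : Fin N => 1/(N:ℝ))
        = (N:ℝ) * (1/(N:ℝ))^2 := by
      simp only [dotProduct]
      rw [Finset.sum_const, Finset.card_univ, Fintype.card_fin, nsmul_eq_mul]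
      ring
    have hlhs : norm2 (fun _ : Fin N => 1 / (N:ℝ)) = Real.sqrt ((N:ℝ) * (1/(N:ℝ))^2) := by
      unfold norm2
      rw [hdot]
    rw [hlhs]
    have hrhs : (6:ℝ) * rbar / (N:ℝ)^2 * norm2 x
        = Real.sqrt (((6:ℝ) * rbar / (N:ℝ)^2)^2 * S) := by
      unfold norm2
      rw [Real.sqrt_mul (by positivity), Real.sqrt_sq (by positivity), hS]
    rw [hrhs]
    apply Real.sqrt_le_sqrt
    have key : (N:ℝ) * (1/(N:ℝ))^2 ≤ ((6:ℝ) * rbar / (N:ℝ)^2)^2 * ((N:ℝ)^3 / (32 * rbar^2)) := by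
      have h1 : (N:ℝ) * (1/(N:ℝ))^2 = 1/(N:ℝ) := by
        field_simp
      have h2 : ((6:ℝ) * rbar / (N:ℝ)^2)^2 * ((N:ℝ)^3 / (32 * rbar^2)) = 9 / (8 * (N:ℝ)) := by
        field_simp
        ring
      rw [h1, h2, div_le_div_iff₀ hN0 (by positivity)]
      nlinarith
    calc (N:ℝ) * (1/(N:ℝ))^2 ≤ ((6:ℝ) * rbar / (N:ℝ)^2)^2 * ((N:ℝ)^3 / (32 * rbar^2)) := key
      _ ≤ ((6:ℝ) * rbar / (N:ℝ)^2)^2 * S := by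
          apply mul_le_mul_of_nonneg_left hSlb (by positivity)
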